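/- Let A=(C,m) be a 3-dimensional toric idealistic cluster, let Q_i be a node of weight m := m_i ≥ 2 whose unique child is P = Q_i(1), of weight m−1, and suppose that the nodes of C proximate to Q_i other than P are exactly the nodes of the form P(2,3^s) or P(3,2^s) belonging to C, that there are m−1 of them in total, and that each has weight 1. If exactly the two labels 2 and 3 occur under Q_i, then χ_i = 0. -/

import Mathlib

open Finset

/-!
Common framework: 3-dimensional toric constellations and toric idealistic clusters.
The edge labels `1, 2, 3` of the paper are encoded as `0, 1, 2 : Fin 3`.
-/

/-- A 3-dimensional toric constellation: a finite rooted tree on nodes `0, …, r−1`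
(node `0` the root, every child having larger index than its parent), each node having
at most three children, the edges from a node to its children carrying pairwise
distinct labels in `Fin 3`.  `label j` is the label of the edge from `parent j` to `j`
(irrelevant for the root). -/
structure ToricConstellation (r : ℕ) where
  parent : Fin r → Fin r
  label : Fin r → Fin 3
  parent_lt : ∀ i : Fin r, 0 < (i : ℕ) → (parent i : ℕ) < (i : ℕ)
  parent_root : ∀ i : Fin r, (i : ℕ) = 0 → parent i = i
  label_distinct : ∀ i j : Fin r, 0 < (i : ℕ) → 0 < (j : ℕ) → i ≠ j →
    parent i = parent j → label i ≠ label j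

namespace ToricConstellation

variable {r : ℕ}

/-- The ordered triple of vectors of `ℤ³` attached to a node: the root carries the
standard basis, and the child along the edge labelled `a` of a node with cone
`(u₁,u₂,u₃)` carries the triple obtained by replacing `u_a` with `u₁+u₂+u₃`. -/
def cone (C : ToricConstellation r) (i : Fin r) : Fin 3 → (Fin 3 → ℤ) :=
  if h : 0 < (i : ℕ) then
    Function.update (cone C (C.parent i)) (C.label i) (∑ a, cone C (C.parent i) a)
  else fun a => Pi.single a 1
termination_by (i : ℕ)
decreasing_by all_goals exact C.parent_lt i h

/-- `v(Q) = u₁ + u₂ + u₃`, the sum of the cone vectors of a node. -/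
def v (C : ToricConstellation r) (i : Fin r) : Fin 3 → ℤ := ∑ a, cone C i a

/-- `Prox C j i` means `j → i`, i.e. `Q_j` is proximate to `Q_i`:
`j ≠ i` and `v(Q_i)` is an entry of `cone(Q_j)`. -/
def Prox (C : ToricConstellation r) (j i : Fin r) : Prop :=
  j ≠ i ∧ ∃ a : Fin 3, cone C j a = v C i

instance (C : ToricConstellation r) (j i : Fin r) : Decidable (C.Prox j i) := by
  unfold Prox; infer_instance

/-- `inChain C i a b j = true` iff `j = Q_i(a, b^t)` for some `t ≥ 0`, i.e. `j` is
reached from `i` by one edge labelled `a` followed by `t` edges labelled `b`. -/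
def inChain (C : ToricConstellation r) (i : Fin r) (a b : Fin 3) (j : Fin r) : Bool :=
  if h : 0 < (j : ℕ) then
    (decide (C.parent j = i) && decide (C.label j = a)) ||
      (decide (C.label j = b) && inChain C i a b (C.parent j))
  else false
termination_by (j : ℕ)
decreasing_by exact C.parent_lt j h

/-- `LinProx C j i` means `j ↠ i`, i.e. `Q_j` is linearly proximate to `Q_i`. -/
def LinProx (C : ToricConstellation r) (j i : Fin r) : Prop :=
  ∃ a b : Fin 3, a ≠ b ∧ inChain C i a b j = true

instance (C : ToricConstellation r) (j i : Fin r) : Decidable (C.LinProx j i) := by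
  unfold LinProx; infer_instance

/-- `j` is a child of `i`. -/
def IsChild (C : ToricConstellation r) (j i : Fin r) : Prop :=
  0 < (j : ℕ) ∧ C.parent j = i

instance (C : ToricConstellation r) (j i : Fin r) : Decidable (C.IsChild j i) := by
  unfold IsChild; infer_instance

/-- The set `S_i` of labels of the edges on the path from the root to `Q_i`. -/
def labelsUnder (C : ToricConstellation r) (i : Fin r) : Finset (Fin 3) :=
  if h : 0 < (i : ℕ) then insert (C.label i) (labelsUnder C (C.parent i)) else ∅
termination_by (i : ℕ)
decreasing_by exact C.parent_lt i h

/-- `i` is a weak ancestor of `j` (`i = j` or `i` a strict ancestor of `j`). -/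
def anc (C : ToricConstellation r) (i j : Fin r) : Bool :=
  decide (i = j) || (if h : 0 < (j : ℕ) then anc C i (C.parent j) else false)
termination_by (j : ℕ)
decreasing_by exact C.parent_lt j h

/-- The set of nodes weakly above `i` (`i` together with its descendants). -/
def weakAbove (C : ToricConstellation r) (i : Fin r) : Finset (Fin r) :=
  univ.filter (fun j => anc C i j = true)

end ToricConstellation

/-- A 3-dimensional toric cluster: a toric constellation together with a positive
integer weight for each node. -/
structure ToricCluster (r : ℕ) extends ToricConstellation r where
  m : Fin r → ℤ
  m_pos : ∀ j, 0 < m j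

namespace ToricCluster

open ToricConstellation

variable {r : ℕ}

/-- `M_{Q_i}(a,b) := Σ_{t ≥ 0, Q_i(a,b^t) ∈ C} m_{Q_i(a,b^t)}`. -/
def M (A : ToricCluster r) (i : Fin r) (a b : Fin 3) : ℤ :=
  ∑ j ∈ univ.filter (fun j => inChain A.toToricConstellation i a b j = true), A.m j

/-- The cluster is idealistic: the linear proximity inequalities
`M_{Q_i}(a,b) + M_{Q_i}(b,a) ≤ m_{Q_i}` hold. -/
def Idealistic (A : ToricCluster r) : Prop :=
  ∀ i : Fin r, ∀ a b : Fin 3, a ≠ b → A.M i a b + A.M i b a ≤ A.m i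

/-- The set of nodes `j` proximate to `i` (`j → i`). -/
def proxSet (A : ToricCluster r) (i : Fin r) : Finset (Fin r) :=
  univ.filter (fun j => Prox A.toToricConstellation j i)

/-- `B_i`: the set of nodes to which `i` is proximate. -/
def Bset (A : ToricCluster r) (i : Fin r) : Finset (Fin r) :=
  univ.filter (fun j => Prox A.toToricConstellation i j)

/-- `A_i`: the children `k` of `i` for which there is no `l` with `i → l` and `k → l`. -/
def Aset (A : ToricCluster r) (i : Fin r) : Finset (Fin r) :=
  univ.filter (fun k => IsChild A.toToricConstellation k i ∧
    ¬ ∃ l, Prox A.toToricConstellation i l ∧ Prox A.toToricConstellation k l)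

/-- The Euler characteristic `χ_i = χ(E_i°)`. -/
def chi (A : ToricCluster r) (i : Fin r) : ℤ :=
  3 + A.m i * (A.m i - 3)
    - ∑ j ∈ A.proxSet i, A.m j * (A.m j - 1)
    + ∑ j ∈ A.proxSet i,
        (A.m j - ∑ k ∈ (A.proxSet i).filter
          (fun k => LinProx A.toToricConstellation k j), A.m k)
    + ∑ j ∈ A.Bset i,
        (A.m i - ∑ k ∈ (A.proxSet j).filter
          (fun k => LinProx A.toToricConstellation k i), A.m k)
    - ((A.Aset i).card : ℤ) - 2 * ((A.Bset i).card : ℤ)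
    + (((A.Bset i).card.choose 2 : ℕ) : ℤ)

/-- `D_i = m_i² − Σ_{j→i} m_j²`. -/
def D (A : ToricCluster r) (i : Fin r) : ℤ :=
  A.m i ^ 2 - ∑ j ∈ A.proxSet i, A.m j ^ 2

/-- `r_{ab} = m_i − M_{Q_i}(a,b) − M_{Q_i}(b,a)`. -/
def rab (A : ToricCluster r) (i : Fin r) (a b : Fin 3) : ℤ :=
  A.m i - A.M i a b - A.M i b a

/-- `R_i = r̂_{12} + r̂_{13} + r̂_{23}`, where `r̂_{ab} = r_{ab}` if the remaining third
label does not appear under `Q_i`, and `r̂_{ab} = 0` otherwise.  (Labels `1,2,3` are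
encoded as `0,1,2 : Fin 3`.) -/
def R (A : ToricCluster r) (i : Fin r) : ℤ :=
  (if (2 : Fin 3) ∉ labelsUnder A.toToricConstellation i then A.rab i 0 1 else 0)
  + (if (1 : Fin 3) ∉ labelsUnder A.toToricConstellation i then A.rab i 0 2 else 0)
  + (if (0 : Fin 3) ∉ labelsUnder A.toToricConstellation i then A.rab i 1 2 else 0)

/-- `T_i = 3 − #A_i − 2·#B_i + (#B_i choose 2)`. -/
def T (A : ToricCluster r) (i : Fin r) : ℤ :=
  3 - ((A.Aset i).card : ℤ) - 2 * ((A.Bset i).card : ℤ)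
    + (((A.Bset i).card.choose 2 : ℕ) : ℤ)

/-- The nodes to which `i` is proximate, of smaller index: the sums in the recursive
definitions of the numerical data range over the nodes to which `i` is proximate,
which are ancestors of `i` and hence have smaller index (making the recursion
well-founded). -/
def anteSet (A : ToricCluster r) (i : Fin r) : Finset (Fin r) :=
  univ.filter (fun j => (j : ℕ) < (i : ℕ) ∧ Prox A.toToricConstellation i j)

/-- The numerical datum `N_i := m_i + Σ_{j : i→j} N_j`. -/
def N (A : ToricCluster r) (i : Fin r) : ℤ :=
  A.m i + ∑ j ∈ (A.anteSet i).attach, N A j.1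
termination_by (i : ℕ)
decreasing_by
  have hj := j.2
  simp only [anteSet, Finset.mem_filter] at hj
  exact hj.2.1

/-- The numerical datum `ν_i := 3 + Σ_{j : i→j} (ν_j − 1)`. -/
def nu (A : ToricCluster r) (i : Fin r) : ℤ :=
  3 + ∑ j ∈ (A.anteSet i).attach, (nu A j.1 - 1)
termination_by (i : ℕ)
decreasing_by
  have hj := j.2
  simp only [anteSet, Finset.mem_filter] at hj
  exact hj.2.1

end ToricCluster


open ToricConstellation ToricCluster


namespace ToricConstellation
variable {r : ℕ} (C : ToricConstellation r)

lemma cone_eq (i : Fin r) : C.cone i = if _ : 0 < (i : ℕ) then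
    Function.update (C.cone (C.parent i)) (C.label i) (∑ a, C.cone (C.parent i) a)
  else fun a => Pi.single a 1 := by
  rw [cone]

lemma inChain_eq (i : Fin r) (a b : Fin 3) (j : Fin r) : C.inChain i a b j =
  if _ : 0 < (j : ℕ) then
    (decide (C.parent j = i) && decide (C.label j = a)) ||
      (decide (C.label j = b) && C.inChain i a b (C.parent j))
  else false := by
  rw [inChain]

lemma labelsUnder_eq (i : Fin r) : C.labelsUnder i =
    if _ : 0 < (i : ℕ) then insert (C.label i) (C.labelsUnder (C.parent i)) else ∅ := by
  rw [labelsUnder]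

lemma anc_eq (i j : Fin r) : C.anc i j =
    (decide (i = j) || (if _ : 0 < (j : ℕ) then C.anc i (C.parent j) else false)) := by
  rw [anc]

/-- strong induction on the index of a node -/
lemma strongFin {P : Fin r → Prop}
    (H : ∀ j : Fin r, (∀ k : Fin r, (k:ℕ) < (j:ℕ) → P k) → P j) : ∀ j, P j := by
  have key : ∀ n (j : Fin r), (j:ℕ) ≤ n → P j := by
    intro n
    induction n with
    | zero => exact fun j hj => H j (fun k hk => absurd hk (by omega))
    | succ n ih => exact fun j hj => H j (fun k hk => ih k (by omega))
  exact fun j => key j j le_rfl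

lemma cone_root (i : Fin r) (h : ¬ 0 < (i:ℕ)) : C.cone i = fun a => Pi.single a 1 := by
  rw [cone_eq]; simp [h]

lemma cone_child (i : Fin r) (h : 0 < (i:ℕ)) :
    C.cone i = Function.update (C.cone (C.parent i)) (C.label i) (C.v (C.parent i)) := by
  rw [cone_eq]; simp [h, v]

lemma inChain_elim {i : Fin r} {a b : Fin 3} {j : Fin r} (h : C.inChain i a b j = true) :
    0 < (j:ℕ) ∧ ((C.parent j = i ∧ C.label j = a) ∨
      (C.label j = b ∧ C.inChain i a b (C.parent j) = true)) := by
  rw [inChain_eq] at h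
  by_cases hj : 0 < (j:ℕ)
  · simp only [hj, dif_pos, Bool.or_eq_true, Bool.and_eq_true, decide_eq_true_eq] at h
    exact ⟨hj, h⟩
  · simp [hj] at h

lemma inChain_base {i : Fin r} {a : Fin 3} (b : Fin 3) {j : Fin r} (hj : 0 < (j:ℕ))
    (hp : C.parent j = i) (hl : C.label j = a) : C.inChain i a b j = true := by
  rw [inChain_eq]; simp [hj, hp, hl]

lemma inChain_step {i : Fin r} {a b : Fin 3} {j : Fin r} (hj : 0 < (j:ℕ))
    (hl : C.label j = b) (hc : C.inChain i a b (C.parent j) = true) :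
    C.inChain i a b j = true := by
  rw [inChain_eq]; simp [hj, hl, hc]

lemma inChain_lt {i : Fin r} {a b : Fin 3} :
    ∀ j, C.inChain i a b j = true → (i:ℕ) < (j:ℕ) := by
  apply strongFin
  intro j ih h
  obtain ⟨hj, h⟩ := C.inChain_elim h
  rcases h with ⟨hp, -⟩ | ⟨-, hc⟩
  · rw [← hp]; exact C.parent_lt j hj
  · exact lt_trans (ih _ (C.parent_lt j hj) hc) (C.parent_lt j hj)

lemma inChain_pos {i : Fin r} {a b : Fin 3} {j : Fin r} (h : C.inChain i a b j = true) :
    0 < (j:ℕ) := (C.inChain_elim h).1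

end ToricConstellation

namespace ToricConstellation
variable {r : ℕ} (C : ToricConstellation r)

/-- integer dot product on `Fin 3 → ℤ` -/
def dot (u w : Fin 3 → ℤ) : ℤ := ∑ c, u c * w c

lemma dot_sum {s : Finset (Fin 3)} (u : Fin 3 → ℤ) (f : Fin 3 → (Fin 3 → ℤ)) :
    dot u (∑ c ∈ s, f c) = ∑ c ∈ s, dot u (f c) := by
  unfold dot
  rw [Finset.sum_comm]
  congr 1; ext j
  simp [Finset.mul_sum]

lemma dot_sub (u w x : Fin 3 → ℤ) : dot (u - w) x = dot u x - dot w x := by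
  unfold dot; rw [← Finset.sum_sub_distrib]; congr 1; ext c; simp [Pi.sub_apply]; ring

lemma dot_add (u w x : Fin 3 → ℤ) : dot (u + w) x = dot u x + dot w x := by
  unfold dot; rw [← Finset.sum_add_distrib]; congr 1; ext c; simp [Pi.add_apply]; ring

lemma dot_single (a b : Fin 3) : dot (Pi.single a 1) (Pi.single b 1) =
    if a = b then 1 else 0 := by
  fin_cases a <;> fin_cases b <;> simp [dot, Fin.sum_univ_three, Pi.single_apply]

/-- the dual basis of the cone of a node -/
def dual (i : Fin r) : Fin 3 → (Fin 3 → ℤ) :=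
  if h : 0 < (i : ℕ) then fun a =>
    if a = C.label i then dual (C.parent i) a
    else dual (C.parent i) a - dual (C.parent i) (C.label i)
  else fun a => Pi.single a 1
termination_by (i : ℕ)
decreasing_by all_goals exact C.parent_lt i h

lemma dual_eq (i : Fin r) : C.dual i = if _ : 0 < (i : ℕ) then fun a =>
    if a = C.label i then C.dual (C.parent i) a
    else C.dual (C.parent i) a - C.dual (C.parent i) (C.label i)
  else fun a => Pi.single a 1 := by rw [dual]

lemma dual_child {i : Fin r} (hi : 0 < (i:ℕ)) (a : Fin 3) :
    C.dual i a = if a = C.label i then C.dual (C.parent i) a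
    else C.dual (C.parent i) a - C.dual (C.parent i) (C.label i) := by
  rw [dual_eq, dif_pos hi]

lemma dual_root {i : Fin r} (hi : ¬ 0 < (i:ℕ)) (a : Fin 3) :
    C.dual i a = Pi.single a 1 := by
  rw [dual_eq, dif_neg hi]

lemma dual_cone : ∀ i : Fin r, ∀ a b : Fin 3,
    dot (C.dual i a) (C.cone i b) = if a = b then 1 else 0 := by
  apply strongFin
  intro i ih a b
  by_cases hi : 0 < (i:ℕ)
  · have ihp := ih (C.parent i) (C.parent_lt i hi)
    rw [C.cone_child i hi, C.dual_child hi]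
    by_cases hb : b = C.label i
    · rw [hb, Function.update_self]
      unfold v
      by_cases ha : a = C.label i
      · rw [if_pos ha, dot_sum]
        simp only [ihp]
        rw [if_pos ha]
        simp
      · rw [if_neg ha, dot_sub, dot_sum, dot_sum]
        simp only [ihp]
        rw [if_neg ha]
        simp
    · rw [Function.update_of_ne hb]
      by_cases ha : a = C.label i
      · rw [if_pos ha, ihp]
      · rw [if_neg ha, dot_sub, ihp, ihp,
          if_neg (fun h : C.label i = b => hb h.symm)]
        simp
  · rw [C.cone_root i hi, C.dual_root hi]
    exact dot_single a b

lemma dual_v (i : Fin r) (a : Fin 3) : dot (C.dual i a) (C.v i) = 1 := by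
  unfold v
  rw [dot_sum]
  simp only [C.dual_cone i]
  simp

end ToricConstellation

namespace ToricConstellation
variable {r : ℕ} (C : ToricConstellation r)

/-- membership in the interior of the cone of a node -/
def inS (i : Fin r) (x : Fin 3 → ℤ) : Prop := ∀ a : Fin 3, 0 < dot (C.dual i a) x

lemma v_mem_inS (i : Fin r) : C.inS i (C.v i) := fun a => by
  rw [C.dual_v i a]; norm_num

lemma inS_parent {i : Fin r} (hi : 0 < (i:ℕ)) {x : Fin 3 → ℤ} (hx : C.inS i x) :
    C.inS (C.parent i) x := by
  intro a
  by_cases ha : a = C.label i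
  · have := hx a
    rwa [C.dual_child hi, if_pos ha] at this
  · have h1 := hx a
    have h2 := hx (C.label i)
    rw [C.dual_child hi, if_pos rfl] at h2
    rw [C.dual_child hi, if_neg ha, dot_sub] at h1
    omega

lemma inS_sib_disjoint {c c' : Fin r} (hc : 0 < (c:ℕ)) (hc' : 0 < (c':ℕ))
    (hne : c ≠ c') (hpar : C.parent c = C.parent c') {x : Fin 3 → ℤ}
    (h1 : C.inS c x) (h2 : C.inS c' x) : False := by
  have hlab := C.label_distinct c c' hc hc' hne hpar
  have a1 := h1 (C.label c')
  have a2 := h2 (C.label c)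
  rw [C.dual_child hc, if_neg (fun h => hlab h.symm), dot_sub] at a1
  rw [C.dual_child hc', if_neg hlab, dot_sub, ← hpar] at a2
  omega

lemma v_parent_not_inS {i : Fin r} (hi : 0 < (i:ℕ)) : ¬ C.inS i (C.v (C.parent i)) := by
  intro h
  set a : Fin 3 := if C.label i = 0 then 1 else 0 with ha
  have hne : a ≠ C.label i := by
    by_cases h0 : C.label i = 0 <;> simp [ha, h0]
    exact fun hc => h0 hc.symm
  have := h a
  rw [C.dual_child hi, if_neg hne, dot_sub, C.dual_v, C.dual_v] at this
  omega

lemma anc_refl (i : Fin r) : C.anc i i = true := by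
  rw [anc_eq]; simp

lemma anc_step {i j : Fin r} (hj : 0 < (j:ℕ)) (h : C.anc i (C.parent j) = true) :
    C.anc i j = true := by
  rw [anc_eq]; simp [hj, h]

lemma anc_elim {i j : Fin r} (h : C.anc i j = true) :
    i = j ∨ (0 < (j:ℕ) ∧ C.anc i (C.parent j) = true) := by
  rw [anc_eq] at h
  by_cases hj : 0 < (j:ℕ)
  · simp only [hj, dif_pos, Bool.or_eq_true, decide_eq_true_eq] at h
    tauto
  · simp only [hj, dif_neg, not_false_iff, Bool.or_false, decide_eq_true_eq] at h
    exact Or.inl h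

lemma anc_le {i : Fin r} : ∀ j, C.anc i j = true → (i:ℕ) ≤ (j:ℕ) := by
  apply strongFin
  intro j ih h
  rcases C.anc_elim h with rfl | ⟨hj, h⟩
  · exact le_refl _
  · exact le_trans (ih _ (C.parent_lt j hj) h) (le_of_lt (C.parent_lt j hj))

lemma anc_root {i : Fin r} (hi : ¬ 0 < (i:ℕ)) : ∀ j, C.anc i j = true := by
  apply strongFin
  intro j ih
  by_cases hj : 0 < (j:ℕ)
  · exact C.anc_step hj (ih _ (C.parent_lt j hj))
  · have : i = j := Fin.ext (by omega)
    rw [this]; exact C.anc_refl j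

lemma inS_anc {w : Fin r} : ∀ j, C.anc w j = true → ∀ x, C.inS j x → C.inS w x := by
  apply strongFin
  intro j ih h x hx
  rcases C.anc_elim h with rfl | ⟨hj, h⟩
  · exact hx
  · exact ih _ (C.parent_lt j hj) h x (C.inS_parent hj hx)

lemma anc_split {w : Fin r} : ∀ k, C.anc w k = true →
    k = w ∨ ∃ c : Fin r, 0 < (c:ℕ) ∧ C.parent c = w ∧ C.anc c k = true := by
  apply strongFin
  intro k ih h
  rcases C.anc_elim h with rfl | ⟨hk, h⟩
  · exact Or.inl rfl
  · rcases ih _ (C.parent_lt k hk) h with rfl | ⟨c, hc, hcp, hca⟩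
    · exact Or.inr ⟨k, hk, rfl, C.anc_refl k⟩
    · exact Or.inr ⟨c, hc, hcp, C.anc_step hk hca⟩

lemma anc_of_inS : ∀ j : Fin r, ∀ k : Fin r, C.inS j (C.v k) → C.anc j k = true := by
  apply strongFin
  intro j ih k hk
  by_cases hj : 0 < (j:ℕ)
  · have hanc : C.anc (C.parent j) k = true :=
      ih _ (C.parent_lt j hj) k (C.inS_parent hj hk)
    rcases C.anc_split _ hanc with rfl | ⟨c, hc, hcp, hca⟩
    · exact absurd hk (C.v_parent_not_inS hj)
    · by_cases hcj : c = j
      · exact hcj ▸ hca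
      · have hvk : C.inS c (C.v k) := C.inS_anc k hca _ (C.v_mem_inS k)
        exact (C.inS_sib_disjoint hc hj hcj hcp hvk hk).elim
  · exact C.anc_root hj k

lemma v_injective {j k : Fin r} (h : C.v j = C.v k) : j = k := by
  have h1 : C.anc j k = true := C.anc_of_inS j k (h ▸ C.v_mem_inS j)
  have h2 : C.anc k j = true := C.anc_of_inS k j (h ▸ C.v_mem_inS k)
  exact Fin.ext (le_antisymm (C.anc_le _ h1) (C.anc_le _ h2))

end ToricConstellation

namespace ToricConstellation
variable {r : ℕ} (C : ToricConstellation r)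

/-- sum of the coordinates -/
def sig (u : Fin 3 → ℤ) : ℤ := ∑ c, u c

lemma sig_single (a : Fin 3) : sig (Pi.single a 1 : Fin 3 → ℤ) = 1 := by
  unfold sig; simp [Pi.single_apply]

lemma sig_v (i : Fin r) : sig (C.v i) = ∑ a, sig (C.cone i a) := by
  simp only [sig, v, Finset.sum_apply]
  exact Finset.sum_comm

lemma one_le_sig_cone : ∀ i : Fin r, ∀ a, 1 ≤ sig (C.cone i a) := by
  apply strongFin
  intro i ih a
  by_cases hi : 0 < (i:ℕ)
  · rw [C.cone_child i hi]
    by_cases ha : a = C.label i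
    · rw [ha, Function.update_self, C.sig_v (C.parent i)]
      have h0 := ih _ (C.parent_lt i hi) 0
      have h1 := ih _ (C.parent_lt i hi) 1
      have h2 := ih _ (C.parent_lt i hi) 2
      rw [Fin.sum_univ_three]
      omega
    · rw [Function.update_of_ne ha]
      exact ih _ (C.parent_lt i hi) a
  · rw [C.cone_root i hi]
    exact le_of_eq (sig_single a).symm

lemma sig_cone_le (i : Fin r) (a : Fin 3) : sig (C.cone i a) + 2 ≤ sig (C.v i) := by
  rw [C.sig_v i, Fin.sum_univ_three]
  have h0 := C.one_le_sig_cone i 0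
  have h1 := C.one_le_sig_cone i 1
  have h2 := C.one_le_sig_cone i 2
  rcases (by omega : a = 0 ∨ a = 1 ∨ a = 2) with rfl | rfl | rfl <;> omega

lemma three_le_sig_v (i : Fin r) : 3 ≤ sig (C.v i) := by
  have := C.sig_cone_le i 0
  have := C.one_le_sig_cone i 0
  omega

lemma sig_v_step {i : Fin r} (hi : 0 < (i:ℕ)) :
    sig (C.v (C.parent i)) + 2 ≤ sig (C.v i) := by
  rw [C.sig_v i, Fin.sum_univ_three]
  have key : ∀ b : Fin 3, C.cone i b = if b = C.label i then C.v (C.parent i)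
      else C.cone (C.parent i) b := by
    intro b
    rw [C.cone_child i hi]
    by_cases hb : b = C.label i
    · rw [if_pos hb, hb, Function.update_self]
    · rw [if_neg hb, Function.update_of_ne hb]
  rw [key 0, key 1, key 2]
  have h0 := C.one_le_sig_cone (C.parent i) 0
  have h1 := C.one_le_sig_cone (C.parent i) 1
  have h2 := C.one_le_sig_cone (C.parent i) 2
  rcases (by omega : C.label i = 0 ∨ C.label i = 1 ∨ C.label i = 2) with h | h | h <;>
    rw [h] <;>
    simp only [show ((0:Fin 3) = 0) = True from by simp, show ((1:Fin 3) = 0) = False from by decide,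
      show ((2:Fin 3) = 0) = False from by decide, show ((0:Fin 3) = 1) = False from by decide,
      show ((1:Fin 3) = 1) = True from by simp, show ((2:Fin 3) = 1) = False from by decide,
      show ((0:Fin 3) = 2) = False from by decide, show ((1:Fin 3) = 2) = False from by decide,
      show ((2:Fin 3) = 2) = True from by simp, if_true, if_false] <;> omega

lemma cone_of_not_label : ∀ i : Fin r, ∀ a, a ∉ C.labelsUnder i →
    C.cone i a = Pi.single a 1 := by
  apply strongFin
  intro i ih a ha
  by_cases hi : 0 < (i:ℕ)
  · rw [labelsUnder_eq, dif_pos hi, Finset.mem_insert] at ha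
    push_neg at ha
    rw [C.cone_child i hi, Function.update_of_ne ha.1]
    exact ih _ (C.parent_lt i hi) a ha.2
  · rw [C.cone_root i hi]

lemma exists_v_of_label : ∀ i : Fin r, ∀ a, a ∈ C.labelsUnder i →
    ∃ j, C.cone i a = C.v j := by
  apply strongFin
  intro i ih a ha
  by_cases hi : 0 < (i:ℕ)
  · rw [labelsUnder_eq, dif_pos hi, Finset.mem_insert] at ha
    by_cases hal : a = C.label i
    · exact ⟨C.parent i, by rw [C.cone_child i hi, hal, Function.update_self]⟩
    · obtain ⟨j, hj⟩ := ih _ (C.parent_lt i hi) a (ha.resolve_left hal)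
      exact ⟨j, by rw [C.cone_child i hi, Function.update_of_ne hal]; exact hj⟩
  · rw [labelsUnder_eq, dif_neg hi] at ha
    exact absurd ha (Finset.notMem_empty a)

end ToricConstellation

namespace ToricConstellation
variable {r : ℕ} (C : ToricConstellation r)

lemma chains_disj {P j : Fin r} (h1 : C.inChain P 1 2 j = true)
    (h2 : C.inChain P 2 1 j = true) : False := by
  obtain ⟨hj, h1⟩ := C.inChain_elim h1
  obtain ⟨-, h2⟩ := C.inChain_elim h2
  rcases h1 with ⟨hp1, hl1⟩ | ⟨hl1, hc1⟩ <;> rcases h2 with ⟨hp2, hl2⟩ | ⟨hl2, hc2⟩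
  · rw [hl1] at hl2; exact absurd hl2 (by decide)
  · exact absurd (C.inChain_lt _ (hp1 ▸ hc2)) (lt_irrefl _)
  · exact absurd (C.inChain_lt _ (hp2 ▸ hc1)) (lt_irrefl _)
  · rw [hl1] at hl2; exact absurd hl2 (by decide)

/-- within one chain from `P`, a linear proximity forces being the immediate successor -/
lemma chain_step_char {P j : Fin r} {x y a b : Fin 3} (hab : a ≠ b)
    (hj : C.inChain P x y j = true) :
    ∀ k, C.inChain P x y k = true → C.inChain j a b k = true → C.parent k = j := by
  apply strongFin
  intro k ih hk hjk
  obtain ⟨hk0, hkc⟩ := C.inChain_elim hjk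
  rcases hkc with ⟨hp, -⟩ | ⟨hlb, hrec⟩
  · exact hp
  · obtain ⟨-, hkx⟩ := C.inChain_elim hk
    rcases hkx with ⟨hpP, hlx⟩ | ⟨hly, hPrec⟩
    · have h1 := C.inChain_lt _ (hpP ▸ hrec)
      have h2 := C.inChain_lt _ hj
      omega
    · have hpp : C.parent (C.parent k) = j := ih _ (C.parent_lt k hk0) hPrec hrec
      obtain ⟨hpk0, hc2⟩ := C.inChain_elim hrec
      rcases hc2 with ⟨-, hla⟩ | ⟨-, hrec2⟩
      · obtain ⟨-, hc3⟩ := C.inChain_elim hPrec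
        rcases hc3 with ⟨hppP, -⟩ | ⟨hly2, -⟩
        · rw [hpp] at hppP
          have h2 := C.inChain_lt _ hj
          rw [hppP] at h2
          omega
        · exact absurd ((hla.symm.trans hly2).trans (hlb.symm.trans hly).symm) hab
      · exact absurd (C.inChain_lt _ (hpp ▸ hrec2)) (lt_irrefl _)

/-- across two different chains from `P`, there are no linear proximities -/
lemma chain_cross {P j : Fin r} {x y x' y' a b : Fin 3}
    (hd : ∀ l : Fin r, C.inChain P x y l = true → C.inChain P x' y' l = true → False)
    (hj : C.inChain P x y j = true) :
    ∀ k, C.inChain P x' y' k = true → C.inChain j a b k = true → False := by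
  apply strongFin
  intro k ih hk hjk
  obtain ⟨hk0, hkc⟩ := C.inChain_elim hjk
  obtain ⟨-, hkx⟩ := C.inChain_elim hk
  rcases hkc with ⟨hp, -⟩ | ⟨-, hrec⟩
  · rcases hkx with ⟨hpP, -⟩ | ⟨-, hPrec⟩
    · have h2 := C.inChain_lt _ hj
      rw [hp] at hpP
      rw [hpP] at h2
      omega
    · exact hd j hj (hp ▸ hPrec)
  · rcases hkx with ⟨hpP, -⟩ | ⟨-, hPrec⟩
    · have h1 := C.inChain_lt _ (hpP ▸ hrec)
      have h2 := C.inChain_lt _ hj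
      omega
    · exact ih _ (C.parent_lt k hk0) hPrec hrec

end ToricConstellation

namespace ToricCluster
variable {r : ℕ} (A : ToricCluster r)

lemma M_nonneg (i : Fin r) (a b : Fin 3) : 0 ≤ A.M i a b :=
  Finset.sum_nonneg (fun j _ => le_of_lt (A.m_pos j))

lemma one_le_m (j : Fin r) : 1 ≤ A.m j := A.m_pos j

end ToricCluster

open ToricConstellation ToricCluster in
/-- descendants of `i` that are linearly proximate to `i` are `P` or children of `P` -/
lemma linprox_descend {r : ℕ} (A : ToricCluster r) (hA : A.Idealistic)
    (i P : Fin r) (mm : ℕ) (hmi : A.m i = (mm : ℤ))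
    (hchild : Finset.univ.filter
        (fun j => IsChild A.toToricConstellation j i) = {P})
    (hPlab : A.toToricConstellation.label P = 0)
    (hmP : A.m P = (mm : ℤ) - 1)
    (hproxchar : ∀ j : Fin r, (Prox A.toToricConstellation j i ∧ j ≠ P) ↔
        (inChain A.toToricConstellation P 1 2 j = true
          ∨ inChain A.toToricConstellation P 2 1 j = true))
    (hw : ∀ j, Prox A.toToricConstellation j i → j ≠ P → A.m j = 1)
    {a b : Fin 3} (hab : a ≠ b) :
    ∀ k, A.toToricConstellation.inChain i a b k = true →
      k = P ∨ (A.toToricConstellation.parent k = P ∧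
        A.toToricConstellation.label k = b ∧ a = 0) := by
  set C := A.toToricConstellation with hC
  have hPc : C.IsChild P i := by
    have h := Finset.mem_singleton_self P
    rw [← hchild] at h
    exact (Finset.mem_filter.mp h).2
  have hP0 : 0 < (P:ℕ) := hPc.1
  have hPar : C.parent P = i := hPc.2
  have hiP : (i:ℕ) < (P:ℕ) := hPar ▸ C.parent_lt P hP0
  have hchild' : ∀ j, C.IsChild j i → j = P := by
    intro j hj
    have : j ∈ Finset.univ.filter (fun j => C.IsChild j i) :=
      Finset.mem_filter.mpr ⟨Finset.mem_univ _, hj⟩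
    rw [hchild] at this
    exact Finset.mem_singleton.mp this
  -- a chain from i with label a at the first step passes through a child of i, i.e. P
  have key : ∀ k, C.inChain i a b k = true → k = P ∨
      (C.parent k = P ∧ C.label k = b ∧ a = 0) := by
    apply ToricConstellation.strongFin
    intro k ih hk
    obtain ⟨hk0, hkc⟩ := C.inChain_elim hk
    rcases hkc with ⟨hp, hla⟩ | ⟨hlb, hrec⟩
    · exact Or.inl (hchild' k ⟨hk0, hp⟩)
    · rcases ih _ (C.parent_lt k hk0) hrec with hPk | ⟨hpp, hlb2, ha0⟩
      · -- parent k = P : conclude, deriving a = 0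
        refine Or.inr ⟨hPk, hlb, ?_⟩
        rw [hPk] at hrec
        obtain ⟨-, hc⟩ := C.inChain_elim hrec
        rcases hc with ⟨-, hla⟩ | ⟨-, hc2⟩
        · rw [← hla, hPlab]
        · rw [hPar] at hc2
          exact absurd (C.inChain_lt _ hc2) (lt_irrefl _)
      · -- grandparent is P : contradiction with idealisticity
        exfalso
        subst ha0
        set pk := C.parent k with hpk
        have hpk0 : 0 < (pk:ℕ) := (C.inChain_elim hrec).1
        have hPpk : (P:ℕ) < (pk:ℕ) := hpp ▸ C.parent_lt pk hpk0
        have hpkk : (pk:ℕ) < (k:ℕ) := C.parent_lt k hk0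
        have hb12 : b = 1 ∨ b = 2 := by
          rcases (by omega : b = 0 ∨ b = 1 ∨ b = 2) with h | h | h
          · exact absurd h.symm hab
          · exact Or.inl h
          · exact Or.inr h
        -- pk is proximate to i with weight 1
        have hpkchain : C.inChain P 1 2 pk = true ∨ C.inChain P 2 1 pk = true := by
          rcases hb12 with h | h
          · exact Or.inl (C.inChain_base 2 hpk0 hpp (hlb2.trans h))
          · exact Or.inr (C.inChain_base 1 hpk0 hpp (hlb2.trans h))
        obtain ⟨hpkProx, hpkne⟩ := (hproxchar pk).mpr hpkchain
        have hmpk : A.m pk = 1 := hw pk hpkProx hpkne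
        -- the three-element subset {P, pk, k} of the chain
        have hPchain : C.inChain i 0 b P = true := C.inChain_base b hP0 hPar hPlab
        have hPne : P ≠ pk := Fin.ne_of_val_ne (by omega)
        have hPnek : P ≠ k := Fin.ne_of_val_ne (by omega)
        have hpknek : pk ≠ k := Fin.ne_of_val_ne (by omega)
        have hsub : ({P, pk, k} : Finset (Fin r)) ⊆
            Finset.univ.filter (fun j => C.inChain i 0 b j = true) := by
          intro x hx
          simp only [Finset.mem_insert, Finset.mem_singleton] at hx
          rcases hx with rfl | rfl | rfl <;>
            refine Finset.mem_filter.mpr ⟨Finset.mem_univ _, ?_⟩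
          · exact hPchain
          · exact hrec
          · exact hk
        have hsum : ∑ x ∈ ({P, pk, k} : Finset (Fin r)), A.m x ≤ A.M i 0 b := by
          apply Finset.sum_le_sum_of_subset_of_nonneg hsub
          intro x _ _
          exact le_of_lt (A.m_pos x)
        rw [Finset.sum_insert (by simp [hPne, hPnek]),
          Finset.sum_insert (by simp [hpknek]), Finset.sum_singleton,
          hmP, hmpk] at hsum
        have hmk := A.one_le_m k
        have hid := hA i 0 b hab
        have hMn := A.M_nonneg i b 0
        rw [hmi] at hid
        omega
  exact key

set_option maxHeartbeats 1000000 in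
/-- Main lemma: the computation of `χ_i`. -/
theorem stmt19' {r : ℕ} (A : ToricCluster r) (hA : A.Idealistic)
    (i P : Fin r) (mm : ℕ) (hmm : 2 ≤ mm) (hmi : A.m i = (mm : ℤ))
    (hchild : Finset.univ.filter
        (fun j => IsChild A.toToricConstellation j i) = {P})
    (hPlab : A.toToricConstellation.label P = 0)
    (hmP : A.m P = (mm : ℤ) - 1)
    (hproxchar : ∀ j : Fin r, (Prox A.toToricConstellation j i ∧ j ≠ P) ↔
        (inChain A.toToricConstellation P 1 2 j = true
          ∨ inChain A.toToricConstellation P 2 1 j = true))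
    (hcard : (Finset.univ.filter
        (fun j => Prox A.toToricConstellation j i ∧ j ≠ P)).card = mm - 1)
    (hw : ∀ j, Prox A.toToricConstellation j i → j ≠ P → A.m j = 1)
    (hS : labelsUnder A.toToricConstellation i = {1, 2}) :
    A.chi i = 0 := by
  set C := A.toToricConstellation with hC
  -- basic facts about P
  have hPc : C.IsChild P i := by
    have h := Finset.mem_singleton_self P
    rw [← hchild] at h
    exact (Finset.mem_filter.mp h).2
  have hP0 : 0 < (P:ℕ) := hPc.1
  have hPar : C.parent P = i := hPc.2
  have hiP : (i:ℕ) < (P:ℕ) := hPar ▸ C.parent_lt P hP0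
  have hchild' : ∀ j, C.IsChild j i → j = P := by
    intro j hj
    have : j ∈ Finset.univ.filter (fun j => C.IsChild j i) :=
      Finset.mem_filter.mpr ⟨Finset.mem_univ _, hj⟩
    rw [hchild] at this
    exact Finset.mem_singleton.mp this
  have hpos_of_parent : ∀ k : Fin r, C.parent k = P → 0 < (k:ℕ) := by
    intro k hk
    by_contra h
    have h0 : (k:ℕ) = 0 := by omega
    have h1 := C.parent_root k h0
    rw [h1] at hk
    rw [hk] at h0
    omega
  -- the two ancestors to which i is proximate
  have h1mem : (1:Fin 3) ∈ C.labelsUnder i := by rw [hS]; decide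
  have h2mem : (2:Fin 3) ∈ C.labelsUnder i := by rw [hS]; decide
  have h0mem : (0:Fin 3) ∉ C.labelsUnder i := by rw [hS]; decide
  obtain ⟨j1, hj1⟩ := C.exists_v_of_label i 1 h1mem
  obtain ⟨j2, hj2⟩ := C.exists_v_of_label i 2 h2mem
  have hcone0 : C.cone i 0 = Pi.single 0 1 := C.cone_of_not_label i 0 h0mem
  have s_i1 : sig (C.v j1) + 2 ≤ sig (C.v i) := by
    rw [← hj1]; exact C.sig_cone_le i 1
  have s_i2 : sig (C.v j2) + 2 ≤ sig (C.v i) := by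
    rw [← hj2]; exact C.sig_cone_le i 2
  have s_P : sig (C.v i) + 2 ≤ sig (C.v P) := by
    have h := C.sig_v_step hP0
    rwa [hPar] at h
  have hj1i : j1 ≠ i := by intro h; rw [h] at s_i1; omega
  have hj2i : j2 ≠ i := by intro h; rw [h] at s_i2; omega
  have hj1j2 : j1 ≠ j2 := by
    intro h
    have e : C.cone i 1 = C.cone i 2 := by rw [hj1, hj2, h]
    have d1 := C.dual_cone i 1 1
    have d2 := C.dual_cone i 1 2
    rw [e] at d1
    rw [if_pos rfl] at d1
    rw [if_neg (by decide)] at d2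
    rw [d2] at d1
    exact absurd d1 (by norm_num)
  -- cone of P
  have hconeP : C.cone P = Function.update (C.cone i) 0 (C.v i) := by
    rw [C.cone_child P hP0, hPar, hPlab]
  have hconeP0 : C.cone P 0 = C.v i := by rw [hconeP, Function.update_self]
  have hconeP1 : C.cone P 1 = C.v j1 := by
    rw [hconeP, Function.update_of_ne (by decide)]; exact hj1
  have hconeP2 : C.cone P 2 = C.v j2 := by
    rw [hconeP, Function.update_of_ne (by decide)]; exact hj2
  have hProxPi : C.Prox P i :=
    ⟨Fin.ne_of_val_ne (by omega), 0, by rw [hconeP0]⟩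
  have hProxPj1 : C.Prox P j1 :=
    ⟨Fin.ne_of_val_ne (by intro h; exact absurd (congrArg (fun t => sig (C.v t))
      (Fin.ext h : P = j1)) (by omega)), 1, hconeP1⟩
  have hProxPj2 : C.Prox P j2 :=
    ⟨Fin.ne_of_val_ne (by intro h; exact absurd (congrArg (fun t => sig (C.v t))
      (Fin.ext h : P = j2)) (by omega)), 2, hconeP2⟩
  have hProxij1 : C.Prox i j1 := ⟨fun h => hj1i h.symm, 1, hj1⟩
  have hProxij2 : C.Prox i j2 := ⟨fun h => hj2i h.symm, 2, hj2⟩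
  -- Bset i = {j1, j2}
  have hBset : A.Bset i = {j1, j2} := by
    ext j
    simp only [ToricCluster.Bset, Finset.mem_filter, Finset.mem_univ, true_and,
      Finset.mem_insert, Finset.mem_singleton]
    constructor
    · rintro ⟨hne, a, ha⟩
      rcases (by omega : a = 0 ∨ a = 1 ∨ a = 2) with rfl | rfl | rfl
      · rw [hcone0] at ha
        have h3 := C.three_le_sig_v j
        rw [← ha, sig_single] at h3
        omega
      · exact Or.inl (C.v_injective (hj1.symm.trans ha)).symm
      · exact Or.inr (C.v_injective (hj2.symm.trans ha)).symm
    · rintro (rfl | rfl)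
      exacts [hProxij1, hProxij2]
  have hBcard : (A.Bset i).card = 2 := by
    rw [hBset, Finset.card_insert_of_notMem (by simp [hj1j2]), Finset.card_singleton]
  -- children of P
  have hD1 : ∀ k : Fin r, C.parent k = P → C.label k = 1 →
      C.Prox k j2 ∧ ¬ C.Prox k j1 := by
    intro k hkp hkl
    have hk0 := hpos_of_parent k hkp
    have hconeK : C.cone k = Function.update (C.cone P) 1 (C.v P) := by
      rw [C.cone_child k hk0, hkp, hkl]
    have hsk : sig (C.v P) + 2 ≤ sig (C.v k) := by
      have h := C.sig_v_step hk0; rwa [hkp] at h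
    constructor
    · refine ⟨?_, 2, ?_⟩
      · intro h; rw [h] at hsk; omega
      · rw [hconeK, Function.update_of_ne (by decide), hconeP2]
    · rintro ⟨hne, a, ha⟩
      rcases (by omega : a = 0 ∨ a = 1 ∨ a = 2) with rfl | rfl | rfl
      · rw [hconeK, Function.update_of_ne (by decide), hconeP0] at ha
        exact hj1i (C.v_injective ha).symm
      · rw [hconeK, Function.update_self] at ha
        have := congrArg sig ha
        omega
      · rw [hconeK, Function.update_of_ne (by decide), hconeP2] at ha
        exact hj1j2 (C.v_injective ha).symm
  have hD2 : ∀ k : Fin r, C.parent k = P → C.label k = 2 →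
      C.Prox k j1 ∧ ¬ C.Prox k j2 := by
    intro k hkp hkl
    have hk0 := hpos_of_parent k hkp
    have hconeK : C.cone k = Function.update (C.cone P) 2 (C.v P) := by
      rw [C.cone_child k hk0, hkp, hkl]
    have hsk : sig (C.v P) + 2 ≤ sig (C.v k) := by
      have h := C.sig_v_step hk0; rwa [hkp] at h
    constructor
    · refine ⟨?_, 1, ?_⟩
      · intro h; rw [h] at hsk; omega
      · rw [hconeK, Function.update_of_ne (by decide), hconeP1]
    · rintro ⟨hne, a, ha⟩
      rcases (by omega : a = 0 ∨ a = 1 ∨ a = 2) with rfl | rfl | rfl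
      · rw [hconeK, Function.update_of_ne (by decide), hconeP0] at ha
        exact hj2i (C.v_injective ha).symm
      · rw [hconeK, Function.update_of_ne (by decide), hconeP1] at ha
        exact hj1j2 (C.v_injective ha)
      · rw [hconeK, Function.update_self] at ha
        have := congrArg sig ha
        omega
  -- linear proximity to i
  have hLP_P : LinProx C P i := ⟨0, 1, by decide, C.inChain_base 1 hP0 hPar hPlab⟩
  have hLP_D : ∀ k, C.parent k = P → C.label k ≠ 0 → LinProx C k i := by
    intro k hkp hkl
    have hk0 := hpos_of_parent k hkp
    refine ⟨0, C.label k, fun h => hkl h.symm, C.inChain_step hk0 rfl ?_⟩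
    rw [hkp]
    exact C.inChain_base (C.label k) hP0 hPar hPlab
  have hLPchar : ∀ k, LinProx C k i ↔
      (k = P ∨ (C.parent k = P ∧ C.label k ≠ 0)) := by
    intro k
    constructor
    · rintro ⟨a, b, hab, hch⟩
      rcases linprox_descend A hA i P mm hmi hchild hPlab hmP hproxchar hw hab k hch
        with h | ⟨h1, h2, h3⟩
      · exact Or.inl h
      · refine Or.inr ⟨h1, ?_⟩
        rw [h2]
        rw [h3] at hab
        exact fun hb => hab hb.symm
    · rintro (rfl | ⟨hkp, hkl⟩)
      exacts [hLP_P, hLP_D k hkp hkl]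
  -- weights of children of P
  have hwD : ∀ k, C.parent k = P → C.label k ≠ 0 → A.m k = 1 := by
    intro k hkp hkl
    have hk0 := hpos_of_parent k hkp
    have hchain : C.inChain P 1 2 k = true ∨ C.inChain P 2 1 k = true := by
      rcases (by omega : C.label k = 0 ∨ C.label k = 1 ∨ C.label k = 2) with h | h | h
      · exact absurd h hkl
      · exact Or.inl (C.inChain_base 2 hk0 hkp h)
      · exact Or.inr (C.inChain_base 1 hk0 hkp h)
    obtain ⟨hprox, hne⟩ := (hproxchar k).mpr hchain
    exact hw k hprox hne
  have hsc : ∀ s : Finset (Fin r), (∀ k ∈ s, A.m k = 1) →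
      ∑ k ∈ s, A.m k = (s.card : ℤ) := by
    intro s hs
    rw [Finset.sum_congr rfl hs, Finset.sum_const, nsmul_eq_mul, mul_one]
  -- the set K of nodes proximate to i other than P
  set K : Finset (Fin r) :=
    Finset.univ.filter (fun j => C.Prox j i ∧ j ≠ P) with hK
  have mem_K : ∀ k, k ∈ K ↔ (C.Prox k i ∧ k ≠ P) := by
    intro k; rw [hK, Finset.mem_filter]; simp
  have hPK : P ∉ K := by rw [mem_K]; tauto
  have hKcard : (K.card : ℤ) = (mm:ℤ) - 1 := by
    rw [hK, hcard]
    push_cast [Nat.cast_sub (by omega : 1 ≤ mm)]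
    ring
  have hKw : ∀ j ∈ K, A.m j = 1 := by
    intro j hj
    obtain ⟨h1, h2⟩ := (mem_K j).mp hj
    exact hw j h1 h2
  have hKchain : ∀ j ∈ K, C.inChain P 1 2 j = true ∨ C.inChain P 2 1 j = true := by
    intro j hj
    exact (hproxchar j).mp ((mem_K j).mp hj)
  have hKpos : ∀ j ∈ K, (P:ℕ) < (j:ℕ) := by
    intro j hj
    rcases hKchain j hj with h | h
    · exact C.inChain_lt _ h
    · exact C.inChain_lt _ h
  have hPS : A.proxSet i = insert P K := by
    ext k
    simp only [ToricCluster.proxSet, Finset.mem_filter, Finset.mem_univ, true_and,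
      Finset.mem_insert]
    constructor
    · intro h
      by_cases hk : k = P
      · exact Or.inl hk
      · exact Or.inr ((mem_K k).mpr ⟨h, hk⟩)
    · rintro (rfl | h)
      · exact hProxPi
      · exact ((mem_K k).mp h).1
  -- the filter for j = P
  have hfiltP : (A.proxSet i).filter (fun k => LinProx C k P) = K := by
    ext k
    rw [Finset.mem_filter]
    constructor
    · rintro ⟨hm, a, b, hab, hch⟩
      have hPk := C.inChain_lt _ hch
      rw [hPS, Finset.mem_insert] at hm
      rcases hm with rfl | hm
      · omega
      · exact hm
    · intro hk
      refine ⟨by rw [hPS]; exact Finset.mem_insert_of_mem hk, ?_⟩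
      rcases hKchain k hk with h | h
      · exact ⟨1, 2, by decide, h⟩
      · exact ⟨2, 1, by decide, h⟩
  -- the filter for j ∈ K
  have hFj : ∀ j ∈ K, (A.proxSet i).filter (fun k => LinProx C k j)
      = K.filter (fun k => C.parent k = j) := by
    intro j hj
    ext k
    rw [Finset.mem_filter, Finset.mem_filter]
    constructor
    · rintro ⟨hm, a, b, hab, hch⟩
      have hjk := C.inChain_lt _ hch
      have hkP : k ≠ P := by
        intro h
        rw [h] at hjk
        exact absurd (hKpos j hj) (by omega)
      have hkprox : C.Prox k i := by
        rw [hPS, Finset.mem_insert] at hm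
        rcases hm with rfl | hm
        · exact absurd rfl hkP
        · exact ((mem_K k).mp hm).1
      have hkK : k ∈ K := (mem_K k).mpr ⟨hkprox, hkP⟩
      refine ⟨hkK, ?_⟩
      rcases hKchain j hj with hjc | hjc <;> rcases hKchain k hkK with hkc | hkc
      · exact C.chain_step_char hab hjc k hkc hch
      · exact (C.chain_cross (fun l h1 h2 => C.chains_disj h1 h2) hjc k hkc hch).elim
      · exact (C.chain_cross (fun l h1 h2 => C.chains_disj h2 h1) hjc k hkc hch).elim
      · exact C.chain_step_char hab hjc k hkc hch
    · rintro ⟨hkK, hpkj⟩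
      have hk0 : 0 < (k:ℕ) := by
        rcases hKchain k hkK with h | h
        · exact C.inChain_pos h
        · exact C.inChain_pos h
      refine ⟨by rw [hPS]; exact Finset.mem_insert_of_mem hkK, ?_⟩
      refine ⟨C.label k, if C.label k = 0 then 1 else 0, ?_, C.inChain_base _ hk0 hpkj rfl⟩
      by_cases h : C.label k = 0
      · rw [h]; simp
      · simp [h]
  -- the children of P in the chains
  set D1 : Finset (Fin r) :=
    Finset.univ.filter (fun k => C.parent k = P ∧ C.label k = 1) with hD1def
  set D2 : Finset (Fin r) :=
    Finset.univ.filter (fun k => C.parent k = P ∧ C.label k = 2) with hD2def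
  set D' : Finset (Fin r) :=
    Finset.univ.filter (fun k => C.parent k = P ∧ C.label k ≠ 0) with hD'def
  have mem_D1 : ∀ k, k ∈ D1 ↔ (C.parent k = P ∧ C.label k = 1) := by
    intro k; rw [hD1def, Finset.mem_filter]; simp
  have mem_D2 : ∀ k, k ∈ D2 ↔ (C.parent k = P ∧ C.label k = 2) := by
    intro k; rw [hD2def, Finset.mem_filter]; simp
  have mem_D' : ∀ k, k ∈ D' ↔ (C.parent k = P ∧ C.label k ≠ 0) := by
    intro k; rw [hD'def, Finset.mem_filter]; simp
  have hD'c : D'.card = D1.card + D2.card := by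
    have hunion : D' = D1 ∪ D2 := by
      ext k
      rw [mem_D', Finset.mem_union, mem_D1, mem_D2]
      constructor
      · rintro ⟨h1, h2⟩
        rcases (by omega : C.label k = 0 ∨ C.label k = 1 ∨ C.label k = 2) with h | h | h
        · exact absurd h h2
        · exact Or.inl ⟨h1, h⟩
        · exact Or.inr ⟨h1, h⟩
      · rintro (⟨h1, h2⟩ | ⟨h1, h2⟩) <;> exact ⟨h1, by omega⟩
    rw [hunion]
    apply Finset.card_union_of_disjoint
    rw [Finset.disjoint_left]
    intro k h1 h2
    rw [mem_D1] at h1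
    rw [mem_D2] at h2
    have := h1.2
    have := h2.2
    omega
  have hPD1 : P ∉ D1 := by
    rw [mem_D1]
    rintro ⟨h, -⟩
    rw [hPar] at h
    exact absurd (congrArg Fin.val h) (by omega)
  have hPD2 : P ∉ D2 := by
    rw [mem_D2]
    rintro ⟨h, -⟩
    rw [hPar] at h
    exact absurd (congrArg Fin.val h) (by omega)
  have hsumD1 : ∑ k ∈ D1, A.m k = (D1.card : ℤ) := by
    apply hsc
    intro k hk
    rw [mem_D1] at hk
    exact hwD k hk.1 (by rw [hk.2]; decide)
  have hsumD2 : ∑ k ∈ D2, A.m k = (D2.card : ℤ) := by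
    apply hsc
    intro k hk
    rw [mem_D2] at hk
    exact hwD k hk.1 (by rw [hk.2]; decide)
  -- inner filters for j1 and j2
  have hfilt1 : (A.proxSet j1).filter (fun k => LinProx C k i) = insert P D2 := by
    ext k
    rw [Finset.mem_filter, ToricCluster.proxSet, Finset.mem_filter, Finset.mem_insert]
    constructor
    · rintro ⟨⟨-, hprox⟩, hLP⟩
      rcases (hLPchar k).mp hLP with rfl | ⟨hkp, hkl⟩
      · exact Or.inl rfl
      · rcases (by omega : C.label k = 0 ∨ C.label k = 1 ∨ C.label k = 2) with h | h | h
        · exact absurd h hkl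
        · exact absurd hprox (hD1 k hkp h).2
        · exact Or.inr ((mem_D2 k).mpr ⟨hkp, h⟩)
    · rintro (rfl | hk)
      · exact ⟨⟨Finset.mem_univ _, hProxPj1⟩, hLP_P⟩
      · rw [mem_D2] at hk
        exact ⟨⟨Finset.mem_univ _, (hD2 k hk.1 hk.2).1⟩,
          hLP_D k hk.1 (by rw [hk.2]; decide)⟩
  have hfilt2 : (A.proxSet j2).filter (fun k => LinProx C k i) = insert P D1 := by
    ext k
    rw [Finset.mem_filter, ToricCluster.proxSet, Finset.mem_filter, Finset.mem_insert]
    constructor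
    · rintro ⟨⟨-, hprox⟩, hLP⟩
      rcases (hLPchar k).mp hLP with rfl | ⟨hkp, hkl⟩
      · exact Or.inl rfl
      · rcases (by omega : C.label k = 0 ∨ C.label k = 1 ∨ C.label k = 2) with h | h | h
        · exact absurd h hkl
        · exact Or.inr ((mem_D1 k).mpr ⟨hkp, h⟩)
        · exact absurd hprox (hD2 k hkp h).2
    · rintro (rfl | hk)
      · exact ⟨⟨Finset.mem_univ _, hProxPj2⟩, hLP_P⟩
      · rw [mem_D1] at hk
        exact ⟨⟨Finset.mem_univ _, (hD1 k hk.1 hk.2).1⟩,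
          hLP_D k hk.1 (by rw [hk.2]; decide)⟩
  -- fiber counting in K
  have htail : K.filter (fun k => ¬ C.parent k ∈ K) = D' := by
    ext k
    rw [Finset.mem_filter, mem_D']
    constructor
    · rintro ⟨hkK, hpar⟩
      rcases hKchain k hkK with h | h <;>
        obtain ⟨hk0, hc⟩ := C.inChain_elim h
      · rcases hc with ⟨hp, hl⟩ | ⟨hl, hrec⟩
        · exact ⟨hp, by rw [hl]; decide⟩
        · exact absurd ((mem_K _).mpr ((hproxchar _).mpr (Or.inl hrec))) hpar
      · rcases hc with ⟨hp, hl⟩ | ⟨hl, hrec⟩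
        · exact ⟨hp, by rw [hl]; decide⟩
        · exact absurd ((mem_K _).mpr ((hproxchar _).mpr (Or.inr hrec))) hpar
    · rintro ⟨hkp, hkl⟩
      have hk0 := hpos_of_parent k hkp
      have hchain : C.inChain P 1 2 k = true ∨ C.inChain P 2 1 k = true := by
        rcases (by omega : C.label k = 0 ∨ C.label k = 1 ∨ C.label k = 2) with h | h | h
        · exact absurd h hkl
        · exact Or.inl (C.inChain_base 2 hk0 hkp h)
        · exact Or.inr (C.inChain_base 1 hk0 hkp h)
      refine ⟨(mem_K k).mpr ((hproxchar k).mpr hchain), ?_⟩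
      rw [hkp]
      exact hPK
  have hfib : ∑ j ∈ K, (K.filter (fun k => C.parent k = j)).card
      = (K.filter (fun k => C.parent k ∈ K)).card := by
    rw [Finset.card_eq_sum_card_fiberwise
      (f := fun k => C.parent k) (s := K.filter (fun k => C.parent k ∈ K)) (t := K)
      (fun x hx => (Finset.mem_filter.mp hx).2)]
    apply Finset.sum_congr rfl
    intro j hj
    congr 1
    ext k
    constructor
    · intro hk
      obtain ⟨h1, h2⟩ := Finset.mem_filter.mp hk
      exact Finset.mem_filter.mpr ⟨Finset.mem_filter.mpr ⟨h1, by show C.parent k ∈ K; rw [h2]; exact hj⟩, h2⟩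
    · intro hk
      obtain ⟨h1, h2⟩ := Finset.mem_filter.mp hk
      exact Finset.mem_filter.mpr ⟨(Finset.mem_filter.mp h1).1, h2⟩
  have hsplit : (K.filter (fun k => C.parent k ∈ K)).card + D'.card = K.card := by
    rw [← htail]
    exact Finset.card_filter_add_card_filter_not (fun k => C.parent k ∈ K)
  -- Aset is empty
  have e4 : A.Aset i = ∅ := by
    ext k
    simp only [Finset.notMem_empty, iff_false]
    intro hk
    rw [ToricCluster.Aset] at hk
    obtain ⟨-, hch, hno⟩ := Finset.mem_filter.mp hk
    exact hno ⟨j1, hProxij1, by rw [hchild' k hch]; exact hProxPj1⟩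
  -- the three sums
  have e1 : ∑ j ∈ A.proxSet i, A.m j * (A.m j - 1) = ((mm:ℤ) - 1) * ((mm:ℤ) - 2) := by
    rw [hPS, Finset.sum_insert hPK, hmP,
      Finset.sum_eq_zero (fun j hj => by rw [hKw j hj]; ring)]
    ring
  have hKsum : ∑ k ∈ K, A.m k = (mm:ℤ) - 1 := by rw [hsc K hKw, hKcard]
  have e2 : ∑ j ∈ A.proxSet i,
      (A.m j - ∑ k ∈ (A.proxSet i).filter (fun k => C.LinProx k j), A.m k)
      = (D'.card : ℤ) := by
    have hterm : ∀ j ∈ A.proxSet i,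
        (A.m j - ∑ k ∈ (A.proxSet i).filter (fun k => C.LinProx k j), A.m k)
        = (if j = P then 0
            else 1 - ((K.filter (fun k => C.parent k = j)).card : ℤ)) := by
      intro j hj
      by_cases hjP : j = P
      · rw [if_pos hjP, hjP, hfiltP, hKsum, hmP]; ring
      · rw [if_neg hjP]
        have hjK : j ∈ K := by
          rw [hPS, Finset.mem_insert] at hj
          tauto
        rw [hFj j hjK, hKw j hjK,
          hsc _ (fun k hk => hKw k (Finset.mem_filter.mp hk).1)]
    rw [Finset.sum_congr rfl hterm, hPS, Finset.sum_insert hPK, if_pos rfl]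
    have hne : ∀ j ∈ K, (if j = P then (0:ℤ)
        else 1 - ((K.filter (fun k => C.parent k = j)).card : ℤ))
        = 1 - ((K.filter (fun k => C.parent k = j)).card : ℤ) :=
      fun j hj => if_neg ((mem_K j).mp hj).2
    rw [Finset.sum_congr rfl hne, zero_add, Finset.sum_sub_distrib, Finset.sum_const,
      nsmul_eq_mul, mul_one, ← Nat.cast_sum, hfib]
    omega
  have e3 : ∑ j ∈ A.Bset i,
      (A.m i - ∑ k ∈ (A.proxSet j).filter (fun k => C.LinProx k i), A.m k)
      = 2 - (D'.card : ℤ) := by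
    rw [hBset, Finset.sum_insert (by simp [hj1j2]), Finset.sum_singleton, hfilt1, hfilt2,
      Finset.sum_insert hPD2, Finset.sum_insert hPD1, hsumD1, hsumD2, hmP, hmi]
    have h := hD'c
    push_cast
    omega
  -- assemble
  simp only [ToricCluster.chi]
  rw [← hC, e1, e2, e3, e4, hBcard, hmi, Finset.card_empty, Nat.choose_self]
  push_cast
  ring

theorem stmt19 {r : ℕ} (A : ToricCluster r) (hA : A.Idealistic)
    (i P : Fin r) (mm : ℕ) (hmm : 2 ≤ mm) (hmi : A.m i = (mm : ℤ))
    (hchild : Finset.univ.filter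
        (fun j => IsChild A.toToricConstellation j i) = {P})
    (hPlab : A.toToricConstellation.label P = 0)
    (hmP : A.m P = (mm : ℤ) - 1)
    (hproxchar : ∀ j : Fin r, (Prox A.toToricConstellation j i ∧ j ≠ P) ↔
        (inChain A.toToricConstellation P 1 2 j = true
          ∨ inChain A.toToricConstellation P 2 1 j = true))
    (hcard : (Finset.univ.filter
        (fun j => Prox A.toToricConstellation j i ∧ j ≠ P)).card = mm - 1)
    (hw : ∀ j, Prox A.toToricConstellation j i → j ≠ P → A.m j = 1)
    (hS : labelsUnder A.toToricConstellation i = {1, 2}) :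
    A.chi i = 0 := by
  exact stmt19' A hA i P mm hmm hmi hchild hPlab hmP hproxchar hcard hw hS
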